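/- arXiv:2105.05319 — 2 statements merged into one kernel-verified Lean document; each statement's English description precedes it below -/
import Mathlib

section
/- Let A = ⊕_{i ∈ ℤ} A_i be a commutative ring with a ℤ-grading such that A_i = 0 for all i > 0. Then every idempotent element e ∈ A (i.e. e² = e) is homogeneous of degree 0, that is, e ∈ A_0. In particular, if moreover A_0 has no nontrivial idempotents, then neither does A. -/
open DirectSum

lemma aux_nilzero {A : Type*} [CommRing A] (𝒜 : ℤ → AddSubgroup A) [GradedRing 𝒜]
    (g : A) (hg : g * g = g)
    (h0 : ∀ i : ℤ, 0 ≤ i → (decompose 𝒜 g i : A) = 0) : g = 0 := by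
  classical
  have hsupp : ∀ n ∈ (decompose 𝒜 g).support, n < 0 := by
    intro n hn
    by_contra h
    push_neg at h
    exact (DFinsupp.mem_support_iff.mp hn) (Subtype.ext (h0 n h))
  by_contra hgne
  have hne : (decompose 𝒜 g).support.Nonempty := by
    rw [Finset.nonempty_iff_ne_empty]
    intro h
    apply hgne
    have : decompose 𝒜 g = 0 := DFinsupp.support_eq_empty.mp h
    simpa using congrArg (decompose 𝒜).symm this
  obtain ⟨n, hn, hmax⟩ := Finset.exists_max_image _ id hne
  have hne0 : (decompose 𝒜 g n : A) ≠ 0 := fun h =>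
    (DFinsupp.mem_support_iff.mp hn) (Subtype.ext h)
  have : (decompose 𝒜 (g * g) n : A) = 0 := by
    rw [decompose_mul]
    rw [DirectSum.coe_mul_apply]
    apply Finset.sum_eq_zero
    rintro ⟨i, j⟩ hij
    simp only [Finset.mem_filter, Finset.mem_product] at hij
    exfalso
    have hi := hmax i hij.1.1
    have hj := hsupp j hij.1.2
    have heq := hij.2
    simp only [id] at hi
    omega
  rw [hg] at this
  exact hne0 this

/-- Let `A = ⊕_{i ∈ ℤ} A_i` be a commutative ring with a ℤ-grading such that `A_i = 0` for
all `i > 0`. Then every idempotent `e ∈ A` is homogeneous of degree `0`, i.e. `e ∈ A_0`.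
In particular, if `A_0` has no nontrivial idempotents, then neither does `A`. -/
theorem idempotent_mem_degree_zero_of_nonpositive_grading
    {A : Type*} [CommRing A] (𝒜 : ℤ → AddSubgroup A) [GradedRing 𝒜]
    (hneg : ∀ i : ℤ, 0 < i → 𝒜 i = ⊥) :
    (∀ e : A, e * e = e → e ∈ 𝒜 0) ∧
      ((∀ a ∈ 𝒜 0, a * a = a → a = 0 ∨ a = 1) →
        ∀ a : A, a * a = a → a = 0 ∨ a = 1) := by
  classical
  have htop : ∀ (x : A) (i : ℤ), 0 < i → (decompose 𝒜 x i : A) = 0 := by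
    intro x i hi
    have hle : 𝒜 i ≤ ⊥ := (hneg i hi).le
    exact AddSubgroup.mem_bot.mp (hle (decompose 𝒜 x i).2)
  have part1 : ∀ e : A, e * e = e → e ∈ 𝒜 0 := by
    intro e he
    set e0 : A := (decompose 𝒜 e 0 : A) with he0def
    have he0mem : e0 ∈ 𝒜 0 := (decompose 𝒜 e 0).2
    have hsupp : ∀ i ∈ (decompose 𝒜 e).support, i ≤ 0 := by
      intro i hi
      by_contra h
      push_neg at h
      exact (DFinsupp.mem_support_iff.mp hi) (Subtype.ext (htop e i h))
    -- e0 is idempotent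
    have he0 : e0 * e0 = e0 := by
      have key : (decompose 𝒜 (e * e) 0 : A) = e0 * e0 := by
        rw [decompose_mul, DirectSum.coe_mul_apply]
        have hsub : (((decompose 𝒜 e).support ×ˢ (decompose 𝒜 e).support).filter
            (fun ij : ℤ × ℤ => ij.1 + ij.2 = 0)) ⊆ {((0 : ℤ), (0 : ℤ))} := by
          rintro ⟨i, j⟩ hij
          simp only [Finset.mem_filter, Finset.mem_product] at hij
          have hi := hsupp i hij.1.1
          have hj := hsupp j hij.1.2
          have heq := hij.2
          simp only [Finset.mem_singleton, Prod.mk.injEq]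
          omega
        rw [Finset.sum_subset hsub ?_, Finset.sum_singleton]
        rintro ⟨i, j⟩ hij hnotin
        simp only [Finset.mem_singleton, Prod.mk.injEq] at hij
        obtain ⟨rfl, rfl⟩ := hij
        simp only [Finset.mem_filter, Finset.mem_product, add_zero, and_true,
          not_and, Classical.not_imp, DFinsupp.mem_support_iff, not_not] at hnotin
        rcases Classical.em ((decompose 𝒜 e) 0 = 0) with h | h
        · rw [show ((decompose 𝒜 e 0 : A)) = 0 from congrArg _ h]; ring
        · rcases Classical.em ((decompose 𝒜 e) 0 = 0) with h' | h'
          · rw [show ((decompose 𝒜 e 0 : A)) = 0 from congrArg _ h']; ring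
          · exact absurd (hnotin h) h'
      rw [he] at key
      exact key.symm.trans he0def.symm
    set u : A := 1 - 2 * e0 with hudef
    have hu2 : u * u = 1 := by rw [hudef]; linear_combination 4 * he0
    set f : A := e - e0 with hfdef
    have hf2 : f * f = u * f := by rw [hfdef, hudef]; linear_combination he - he0
    set g : A := u * f with hgdef
    have hgg : g * g = g := by
      calc g * g = (u * u) * (f * f) := by rw [hgdef]; ring
        _ = g := by rw [hu2, hf2, one_mul, hgdef]
    have humem : u ∈ 𝒜 0 :=
      sub_mem (SetLike.one_mem_graded 𝒜) (by rw [two_mul]; exact add_mem he0mem he0mem)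
    have hf0 : (decompose 𝒜 f 0 : A) = 0 := by
      rw [hfdef, decompose_sub]
      simp [decompose_of_mem_same 𝒜 he0mem, ← he0def]
    have hgi : ∀ i : ℤ, 0 ≤ i → (decompose 𝒜 g i : A) = 0 := by
      intro i hi
      rcases hi.lt_or_eq with h | h
      · exact htop g i h
      · subst h
        have := coe_decompose_mul_add_of_left_mem (𝒜 := 𝒜) (i := 0) (j := 0) (b := f) humem
        simpa [hf0, ← hgdef] using this
    have hg0 : g = 0 := aux_nilzero 𝒜 g hgg hgi
    have hfz : f = 0 := by
      calc f = (u * u) * f := by rw [hu2, one_mul]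
        _ = u * g := by rw [hgdef]; ring
        _ = 0 := by rw [hg0, mul_zero]
    have hee : e = e0 := by rw [hfdef] at hfz; exact sub_eq_zero.mp hfz
    rw [hee]; exact he0mem
  refine ⟨part1, fun h a ha => h a (part1 a ha) ha⟩
end

section
/- Let k be a perfect field of characteristic p, let W(k) be its ring of Witt vectors, and let A = W(k)[[u]]. Let M be a finitely generated A-module such that: (i) M[1/p] is a free A[1/p]-module, and (ii) M ⊗_A W(k) = M/uM is p-torsion free (equivalently, free over W(k)). Then M is a free A-module. -/
open Function Submodule

section Aux

variable {R : Type*} [CommRing R] [IsDomain R]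
variable {M : Type*} [AddCommGroup M] [Module R M]

theorem aux_free {ι : Type*} [Fintype ι] (y : ι → M)
    (hspan : Submodule.span R (Set.range y) = ⊤)
    (hli : LinearIndependent (FractionRing R)
      (fun i => LocalizedModule.mkLinearMap (nonZeroDivisors R) M (y i))) :
    Module.Free R M := by
  classical
  set S := nonZeroDivisors R
  set F := FractionRing R
  set ML := LocalizedModule S M
  set v : ι → ML := fun i => LocalizedModule.mkLinearMap S M (y i) with hv
  set φ : (ι → R) →ₗ[R] M := Fintype.linearCombination R y with hφdef
  have hφ : Surjective φ := by
    rw [← LinearMap.range_eq_top, hφdef, Fintype.range_linearCombination, hspan]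
  set ψ : (ι → F) →ₗ[F] ML := Fintype.linearCombination F v with hψdef
  have hψapp : ∀ c : ι → F, ψ c = ∑ i, c i • v i := fun c => rfl
  have key : ∀ c : ι → R, ψ (fun i => algebraMap R F (c i)) =
      LocalizedModule.mkLinearMap S M (φ c) := by
    intro c
    rw [hψapp, hφdef, Fintype.linearCombination_apply, map_sum]
    refine Finset.sum_congr rfl fun i _ => ?_
    rw [map_smul, algebraMap_smul]
  have hψ : Surjective ψ := by
    intro z
    induction z using LocalizedModule.induction_on with
    | h m s =>
      obtain ⟨c, rfl⟩ := hφ m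
      refine ⟨fun i => Localization.mk 1 s * algebraMap R F (c i), ?_⟩
      rw [hψapp]
      simp_rw [mul_smul]
      rw [← Finset.smul_sum, ← hψapp, key c]
      show Localization.mk 1 s • LocalizedModule.mk (φ c) 1 = _
      rw [LocalizedModule.mk_smul_mk, one_smul, mul_one]
  haveI : Module.Finite F ML := by
    refine ⟨⟨Finset.univ.image v, ?_⟩⟩
    rw [eq_top_iff]
    rintro z -
    obtain ⟨c, rfl⟩ := hψ z
    rw [hψapp]
    exact Submodule.sum_mem _ fun i _ => Submodule.smul_mem _ _
      (Submodule.subset_span (by simp))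
  have hdim : Module.finrank F (ι → F) = Module.finrank F ML := by
    have h1 : Fintype.card ι ≤ Module.finrank F ML := hli.fintype_card_le_finrank
    have h2 : Module.finrank F ML ≤ Module.finrank F (ι → F) := by
      have h3 := LinearMap.finrank_range_le ψ
      rwa [LinearMap.range_eq_top.mpr hψ, finrank_top] at h3
    rw [Module.finrank_pi] at *
    omega
  have hψinj : Injective ψ :=
    (LinearMap.injective_iff_surjective_of_finrank_eq_finrank hdim).mpr hψ
  have hφinj : Injective φ := by
    intro c c' h
    have h2 : ψ (fun i => algebraMap R F (c i)) = ψ (fun i => algebraMap R F (c' i)) := by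
      rw [key, key, h]
    have h3 := hψinj h2
    funext i
    exact IsFractionRing.injective R F (congrFun h3 i)
  exact Module.Free.of_equiv (LinearEquiv.ofBijective φ ⟨hφinj, hφ⟩)


end Aux

section Main

open PowerSeries

set_option maxHeartbeats 1000000 in
theorem aux_main {R : Type*} [CommRing R] [IsDomain R] [IsPrincipalIdealRing R] [IsLocalRing R]
    (p : ℕ) (hp : (p : R) ≠ 0)
    (hfact : ∀ a : R, a ≠ 0 → ∃ (m : ℕ) (u : Rˣ), a = (p : R) ^ m * u)
    (M : Type*) [AddCommGroup M] [Module (PowerSeries R) M]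
    [Module.Finite (PowerSeries R) M]
    (hfree : Module.Free (Localization (Submonoid.powers ((p : PowerSeries R))))
      (LocalizedModule (Submonoid.powers ((p : PowerSeries R))) M))
    (htf : ∀ x : M ⧸ (Ideal.span {(PowerSeries.X : PowerSeries R)} •
        (⊤ : Submodule (PowerSeries R) M)),
      (p : PowerSeries R) • x = 0 → x = 0) :
    Module.Free (PowerSeries R) M := by
  classical
  set A := PowerSeries R with hAdef
  set I : Ideal A := Ideal.span {(PowerSeries.X : A)} with hIdef
  set NN := M ⧸ (I • (⊤ : Submodule A M)) with hNNdef
  letI : Module R NN := Module.compHom NN (PowerSeries.C (R := R))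
  have smul_def : ∀ (r : R) (n : NN), r • n = (PowerSeries.C (R := R) r) • n := fun _ _ => rfl
  -- p as element of A
  have hpA : (p : A) = PowerSeries.C (R := R) (p : R) := by rw [map_natCast]
  have hpA0 : (p : A) ≠ 0 := fun h => hp (by
    have := congrArg (PowerSeries.constantCoeff (R := R)) h
    rwa [map_natCast, map_zero] at this)
  -- step 0 : elements with zero constant coefficient kill NN
  have L0 : ∀ b : A, PowerSeries.constantCoeff (R := R) b = 0 → ∀ n : NN, b • n = 0 := by
    intro b hb n
    obtain ⟨m, rfl⟩ := Submodule.Quotient.mk_surjective _ n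
    rw [← Submodule.Quotient.mk_smul, Submodule.Quotient.mk_eq_zero]
    exact Submodule.smul_mem_smul
      (Ideal.mem_span_singleton.mpr (PowerSeries.X_dvd_iff.mpr hb)) trivial
  have smul_compat : ∀ (a : A) (n : NN),
      a • n = (PowerSeries.constantCoeff (R := R) a) • n := by
    intro a n
    have h := L0 (a - PowerSeries.C (R := R) (PowerSeries.constantCoeff (R := R) a)) (by simp) n
    rw [sub_smul, sub_eq_zero] at h
    rw [smul_def]; exact h
  -- NN is finite over R
  haveI : Module.Finite R NN := by
    obtain ⟨s, hs⟩ := Module.Finite.fg_top (R := A) (M := M)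
    refine ⟨⟨s.image (Submodule.Quotient.mk (p := I • (⊤ : Submodule A M))), ?_⟩⟩
    rw [eq_top_iff]
    rintro n -
    obtain ⟨m, rfl⟩ := Submodule.Quotient.mk_surjective _ n
    have hm : m ∈ Submodule.span A (s : Set M) := by rw [hs]; trivial
    refine Submodule.span_induction ?_ ?_ ?_ ?_ hm
    · intro x hx
      exact Submodule.subset_span (by simp only [Finset.coe_image]; exact Set.mem_image_of_mem _ hx)
    · simpa using Submodule.zero_mem _
    · intro x y _ _ hx hy
      rw [Submodule.Quotient.mk_add]
      exact Submodule.add_mem _ hx hy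
    · intro a x _ hx
      rw [Submodule.Quotient.mk_smul, smul_compat]
      exact Submodule.smul_mem _ _ hx
  -- no torsion
  have htf' : ∀ x : NN, (p : R) • x = 0 → x = 0 := by
    intro x hx
    refine htf x ?_
    rwa [hpA, ← smul_def]
  have hps : ∀ (m : ℕ) (x : NN), (p : R) ^ m • x = 0 → x = 0 := by
    intro m
    induction m with
    | zero => intro x hx; simpa using hx
    | succ m ih =>
      intro x hx
      refine htf' x (ih _ ?_)
      rw [← mul_smul, ← pow_succ]
      exact hx
  haveI : NoZeroSMulDivisors R NN := by
    constructor
    intro r x h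
    by_cases hr : r = 0
    · exact Or.inl hr
    · refine Or.inr ?_
      obtain ⟨m, u, rfl⟩ := hfact r hr
      rw [mul_smul] at h
      have hu : (u : R) • x = 0 := hps m _ h
      have := congrArg (fun z => ((u⁻¹ : Rˣ) : R) • z) hu
      simpa [← mul_smul] using this
  haveI : Module.Free R NN := Module.free_of_finite_type_torsion_free'
  set ι := Module.Free.ChooseBasisIndex R NN with hι
  let B : Module.Basis ι R NN := Module.Free.chooseBasis R NN
  have hy' : ∀ i : ι, ∃ m : M, Submodule.Quotient.mk m = B i :=
    fun i => Submodule.Quotient.mk_surjective _ (B i)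
  choose y hy using hy'
  have hXm : (PowerSeries.X : A) ∈ IsLocalRing.maximalIdeal A := by
    rw [IsLocalRing.mem_maximalIdeal, mem_nonunits_iff]
    intro h
    have h2 := PowerSeries.isUnit_constantCoeff _ h
    rw [PowerSeries.constantCoeff_X] at h2
    exact not_isUnit_zero h2
  have hIm : I • (⊤ : Submodule A M) ≤ (IsLocalRing.maximalIdeal A) • ⊤ :=
    Submodule.smul_mono_left
      (by rw [hIdef, Ideal.span_le]; exact Set.singleton_subset_iff.mpr hXm)
  have hspan : Submodule.span A (Set.range y) = ⊤ := by
    rw [← IsLocalRing.map_mkQ_eq_top]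
    rw [eq_top_iff]
    rintro z -
    obtain ⟨m, rfl⟩ := Submodule.Quotient.mk_surjective _ z
    set w : ι → R := fun i => B.repr (Submodule.Quotient.mk m) i with hw
    refine ⟨∑ i, PowerSeries.C (R := R) (w i) • y i, ?_, ?_⟩
    · exact Submodule.sum_mem _ fun i _ =>
        Submodule.smul_mem _ _ (Submodule.subset_span (Set.mem_range_self i))
    · have h1 : (I • (⊤ : Submodule A M)).mkQ (∑ i, PowerSeries.C (R := R) (w i) • y i)
          = Submodule.Quotient.mk m := by
        rw [map_sum]
        have h2 : ∀ i : ι, (I • (⊤ : Submodule A M)).mkQ (PowerSeries.C (R := R) (w i) • y i)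
            = w i • B i := by
          intro i
          rw [map_smul, Submodule.mkQ_apply, hy i, ← smul_def]
        simp_rw [h2]
        exact B.sum_repr _
      have h3 : ((∑ i, PowerSeries.C (R := R) (w i) • y i) - m) ∈ I • (⊤ : Submodule A M) := by
        rw [← Submodule.Quotient.mk_eq_zero, ← Submodule.mkQ_apply, map_sub, h1,
          Submodule.mkQ_apply, sub_self]
      rw [Submodule.mkQ_apply]
      exact (Submodule.Quotient.eq _).mpr (hIm h3)
  set S0 := nonZeroDivisors A with hS0
  have hple : Submonoid.powers ((p : A)) ≤ nonZeroDivisors A :=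
    powers_le_nonZeroDivisors_of_noZeroDivisors hpA0
  haveI : IsDomain (Localization (Submonoid.powers ((p : A)))) :=
    IsLocalization.isDomain_localization hple
  have L2 : ∀ t : M, LocalizedModule.mk t (1 : S0) = 0 → ∃ m : ℕ, ((p : A)) ^ m • t = 0 := by
    intro t ht
    rw [← LocalizedModule.zero_mk (1 : S0), LocalizedModule.mk_eq] at ht
    obtain ⟨u, hu⟩ := ht
    have hu' : (u : A) • t = 0 := by
      rw [one_smul, one_smul, smul_zero] at hu
      rwa [Submonoid.smul_def] at hu
    set z : LocalizedModule (Submonoid.powers ((p : A))) M := LocalizedModule.mk t 1 with hz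
    let Bp := Module.Free.chooseBasis (Localization (Submonoid.powers ((p : A))))
      (LocalizedModule (Submonoid.powers ((p : A))) M)
    have h4 : algebraMap A (Localization (Submonoid.powers ((p : A)))) u • z = 0 := by
      rw [algebraMap_smul, hz, LocalizedModule.smul'_mk, hu', LocalizedModule.zero_mk]
    have h6 : algebraMap A (Localization (Submonoid.powers ((p : A)))) u ≠ 0 := fun h =>
      nonZeroDivisors.coe_ne_zero u (IsLocalization.injective _ hple (by rw [h, map_zero]))
    have hrep : Bp.repr z = 0 := by
      have h5 := congrArg Bp.repr h4
      rw [map_smul, map_zero] at h5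
      ext j
      have h7 := DFunLike.congr_fun h5 j
      rw [Finsupp.smul_apply, smul_eq_mul] at h7
      simpa using (mul_eq_zero.mp h7).resolve_left h6
    have hz0' : z = 0 := by
      have h8 := congrArg Bp.repr.symm hrep
      simpa using h8
    rw [hz, ← LocalizedModule.zero_mk (1 : Submonoid.powers ((p : A))),
      LocalizedModule.mk_eq] at hz0'
    obtain ⟨v, hv⟩ := hz0'
    obtain ⟨m, hm⟩ := (Submonoid.mem_powers_iff _ _).mp v.2
    have hv' : (v : A) • t = 0 := by
      rw [one_smul, one_smul, smul_zero] at hv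
      rwa [Submonoid.smul_def] at hv
    exact ⟨m, hm ▸ hv'⟩
  have L3 : ∀ a : ι → A, (∑ i, a i • LocalizedModule.mk (y i) (1 : S0)) = 0 →
      ∀ i, PowerSeries.constantCoeff (R := R) (a i) = 0 := by
    intro a ha i
    have hsum : LocalizedModule.mk (∑ j, a j • y j) (1 : S0) = 0 := by
      rw [← LocalizedModule.mkLinearMap_apply, map_sum]
      simp_rw [map_smul, LocalizedModule.mkLinearMap_apply]
      exact ha
    obtain ⟨m, hm⟩ := L2 _ hsum
    have e2 : (I • (⊤ : Submodule A M)).mkQ ((p : A) ^ m • ∑ j, a j • y j)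
        = ∑ j, ((p : R) ^ m * PowerSeries.constantCoeff (R := R) (a j)) • B j := by
      rw [map_smul, map_sum, Finset.smul_sum]
      refine Finset.sum_congr rfl fun j _ => ?_
      rw [map_smul, Submodule.mkQ_apply, hy j, ← mul_smul, smul_compat, map_mul, map_pow,
        map_natCast]
    have e3 : (0 : NN) = ∑ j, ((p : R) ^ m * PowerSeries.constantCoeff (R := R) (a j)) • B j := by
      rw [← e2, hm, map_zero]
    have e4 := Fintype.linearIndependent_iff.mp B.linearIndependent
      (fun j => (p : R) ^ m * PowerSeries.constantCoeff (R := R) (a j)) e3.symm i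
    exact (mul_eq_zero.mp e4).resolve_left (pow_ne_zero m hp)
  have hXF : algebraMap A (FractionRing A) PowerSeries.X ≠ 0 := fun h =>
    PowerSeries.X_ne_zero (IsFractionRing.injective A (FractionRing A) (by rw [h, map_zero]))
  have L4 : ∀ (K : ℕ) (a : ι → A),
      (∑ i, a i • LocalizedModule.mk (y i) (1 : S0)) = 0 →
      ∀ i, (PowerSeries.X : A) ^ K ∣ a i := by
    intro K
    induction K with
    | zero => intro a _ i; simpa using one_dvd _
    | succ K ih =>
      intro a ha i
      have hdvd : ∀ j, ∃ b : A, a j = PowerSeries.X * b := fun j =>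
        PowerSeries.X_dvd_iff.mpr (L3 a ha j)
      choose b hb using hdvd
      have hb0 : (∑ j, b j • LocalizedModule.mk (y j) (1 : S0)) = 0 := by
        have h5 : (PowerSeries.X : A) • (∑ j, b j • LocalizedModule.mk (y j) (1 : S0)) = 0 := by
          rw [Finset.smul_sum]
          simp_rw [← mul_smul, ← hb]
          exact ha
        rw [← algebraMap_smul (FractionRing A)] at h5
        have h6 := congrArg (fun w => (algebraMap A (FractionRing A) PowerSeries.X)⁻¹ • w) h5
        simp only [smul_smul, smul_zero] at h6
        rw [inv_mul_cancel₀ hXF, one_smul] at h6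
        exact h6
      obtain ⟨c, hc⟩ := ih b hb0 i
      exact ⟨c, by rw [hb i, hc, ← mul_assoc, ← pow_succ']⟩
  have hli : LinearIndependent (FractionRing A)
      (fun i => LocalizedModule.mkLinearMap S0 M (y i)) := by
    rw [Fintype.linearIndependent_iff]
    intro g hg
    obtain ⟨d, hd⟩ := IsLocalization.exist_integer_multiples_of_finite S0 g
    have hd' : ∀ i, ∃ a : A, algebraMap A (FractionRing A) a = (d : A) • g i := fun i =>
      RingHom.mem_range.mp (hd i)
    choose a ha using hd'
    have hsum : (∑ i, a i • LocalizedModule.mk (y i) (1 : S0)) = 0 := by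
      have e1 : ∀ i, a i • LocalizedModule.mk (y i) (1 : S0) =
          algebraMap A (FractionRing A) (d : A) •
            (g i • LocalizedModule.mk (y i) (1 : S0)) := by
        intro i
        rw [← algebraMap_smul (FractionRing A) (a i), ha i, Algebra.smul_def, mul_smul]
      simp_rw [e1, ← Finset.smul_sum]
      have hg' : (∑ i, g i • LocalizedModule.mk (y i) (1 : S0)) = 0 := by
        simpa [LocalizedModule.mkLinearMap_apply] using hg
      rw [hg', smul_zero]
    have haz : ∀ i, a i = 0 := by
      intro i
      apply PowerSeries.ext
      intro n
      have h6 := L4 (n + 1) a hsum i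
      rw [PowerSeries.X_pow_dvd_iff] at h6
      simpa using h6 n (Nat.lt_succ_self n)
    intro i
    have h7 : algebraMap A (FractionRing A) (a i) = (d : A) • g i := ha i
    rw [haz i, map_zero] at h7
    have h9 : algebraMap A (FractionRing A) (d : A) ≠ 0 := fun h =>
      nonZeroDivisors.coe_ne_zero d
        (IsFractionRing.injective A (FractionRing A) (by rw [h, map_zero]))
    rw [Algebra.smul_def] at h7
    exact (mul_eq_zero.mp h7.symm).resolve_left h9
  exact aux_free y hspan hli

end Main



/-- Let `k` be a perfect field of characteristic `p`, `W(k)` its ring of Witt vectors and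
`A = W(k)⟦u⟧`.  Let `M` be a finitely generated `A`-module such that `M[1/p]` is free
over `A[1/p]` and `M/uM` is `p`-torsion free.  Then `M` is a free `A`-module. -/
theorem free_of_free_after_inverting_p_and_p_torsion_free_special_fiber
    (p : ℕ) [Fact p.Prime] {k : Type*} [Field k] [CharP k p] [PerfectRing k p]
    (M : Type*) [AddCommGroup M]
    [Module (PowerSeries (WittVector p k)) M]
    [Module.Finite (PowerSeries (WittVector p k)) M]
    (hfree : Module.Free
      (Localization (Submonoid.powers ((p : PowerSeries (WittVector p k)))))
      (LocalizedModule (Submonoid.powers ((p : PowerSeries (WittVector p k)))) M))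
    (htf : ∀ x : M ⧸ (Ideal.span {(PowerSeries.X : PowerSeries (WittVector p k))} •
        (⊤ : Submodule (PowerSeries (WittVector p k)) M)),
      (p : PowerSeries (WittVector p k)) • x = 0 → x = 0) :
    Module.Free (PowerSeries (WittVector p k)) M := by
  haveI hdvr := WittVector.isDiscreteValuationRing (p := p) (k := k)
  haveI : IsPrincipalIdealRing (WittVector p k) := hdvr.toIsPrincipalIdealRing
  haveI : IsLocalRing (WittVector p k) := hdvr.toIsLocalRing
  have hp : (p : WittVector p k) ≠ 0 := (WittVector.irreducible p).ne_zero
  have hfact : ∀ a : WittVector p k, a ≠ 0 →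
      ∃ (m : ℕ) (u : (WittVector p k)ˣ), a = (p : WittVector p k) ^ m * u := by
    intro a ha
    obtain ⟨m, u, h⟩ := WittVector.exists_eq_pow_p_mul' a ha
    exact ⟨m, u, h⟩
  exact aux_main p hp hfact M hfree htf
end
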